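/- If a word w represents a graph G, then π(w)w also represents G, where π(w) is the initial permutation of w. -/

import Mathlib

open SimpleGraph

variable {V : Type*}

/-- Two distinct letters `x` and `y` alternate in a word `w` if the subsequence of `w`
consisting of all occurrences of `x` and `y` is strictly alternating. -/
def Alternates [DecidableEq V] (x y : V) (w : List V) : Prop :=
  (w.filter (fun z => decide (z = x ∨ z = y))).Chain' (· ≠ ·)

/-- A word `w` represents the graph `G` if it contains every vertex at least once and
two distinct vertices are adjacent iff they alternate in `w`. -/
def Represents [DecidableEq V] (G : SimpleGraph V) (w : List V) : Prop :=
  (∀ v : V, v ∈ w) ∧ ∀ x y : V, x ≠ y → (G.Adj x y ↔ Alternates x y w)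

/-- A graph is word-representable if some word represents it. -/
def WordRepresentable [DecidableEq V] (G : SimpleGraph V) : Prop :=
  ∃ w : List V, Represents G w

/-- `l(G)`: the minimum length of a word-representant of `G`. -/
noncomputable def reprLen [DecidableEq V] (G : SimpleGraph V) : ℕ :=
  sInf {n | ∃ w : List V, Represents G w ∧ w.length = n}

/-- The initial permutation `π(w)`: keep only the leftmost occurrence of each letter. -/
def initPerm [DecidableEq V] (w : List V) : List V := w.reverse.dedup.reverse


private lemma filter_dedup' [DecidableEq V] (p : V → Bool) (l : List V) :
    (l.dedup).filter p = (l.filter p).dedup := by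
  induction l with
  | nil => simp
  | cons a l ih =>
    by_cases ha : a ∈ l
    · rw [List.dedup_cons_of_mem ha]
      by_cases hp : p a
      · rw [List.filter_cons_of_pos hp, List.dedup_cons_of_mem (List.mem_filter.mpr ⟨ha, hp⟩), ih]
      · rw [List.filter_cons_of_neg (by simpa using hp), ih]
    · rw [List.dedup_cons_of_notMem ha]
      by_cases hp : p a
      · rw [List.filter_cons_of_pos hp, List.filter_cons_of_pos hp,
          List.dedup_cons_of_notMem (fun h => ha (List.mem_filter.mp h).1), ih]
      · rw [List.filter_cons_of_neg (by simpa using hp), List.filter_cons_of_neg (by simpa using hp), ih]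

private lemma initPerm_filter [DecidableEq V] (p : V → Bool) (w : List V) :
    (initPerm w).filter p = initPerm (w.filter p) := by
  simp only [initPerm, List.filter_reverse, filter_dedup']

private lemma dedup_append_of_subset [DecidableEq V] {l r : List V}
    (h : ∀ z ∈ l, z ∈ r) : (l ++ r).dedup = r.dedup := by
  induction l with
  | nil => simp
  | cons a l ih =>
    rw [List.cons_append, List.dedup_cons_of_mem
      (List.mem_append.mpr (Or.inr (h a (List.mem_cons_self)))),
      ih (fun z hz => h z (List.mem_cons_of_mem a hz))]

private lemma initPerm_two [DecidableEq V] {a b : V} {t : List V} (hab : a ≠ b)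
    (ht : ∀ z ∈ t, z = a ∨ z = b) : initPerm (a :: b :: t) = [a, b] := by
  have : (a :: b :: t).reverse = t.reverse ++ [b, a] := by simp
  rw [initPerm, this, dedup_append_of_subset (fun z hz => by
    rcases ht z (List.mem_reverse.mp hz) with h | h <;> simp [h])]
  rw [List.dedup_cons_of_notMem (by simpa using fun h => hab h.symm)]
  simp

theorem stmt3 [DecidableEq V] (G : SimpleGraph V) (w : List V)
    (hrep : Represents G w) : Represents G (initPerm w ++ w) := by
  obtain ⟨hmem, hadj⟩ := hrep
  refine ⟨fun v => List.mem_append.mpr (Or.inr (hmem v)), fun x y hxy => ?_⟩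
  rw [hadj x y hxy]
  set p : V → Bool := fun z => decide (z = x ∨ z = y) with hp
  unfold Alternates
  rw [List.filter_append, initPerm_filter]
  set f := w.filter p with hf
  clear_value f
  constructor
  · intro hcf
    have hxf : x ∈ f := hf ▸ List.mem_filter.mpr ⟨hmem x, by simp [hp]⟩
    have hyf : y ∈ f := hf ▸ List.mem_filter.mpr ⟨hmem y, by simp [hp]⟩
    have hall : ∀ z ∈ f, z = x ∨ z = y := fun z hz => by
      have := (List.mem_filter.mp (hf ▸ hz)).2
      simpa [hp] using this
    obtain ⟨a, f', rfl⟩ : ∃ a f', f = a :: f' := by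
      cases f with
      | nil => exact absurd hxf (by simp)
      | cons a f' => exact ⟨a, f', rfl⟩
    have hcx : x ∈ a :: f' := hxf
    have hcy : y ∈ a :: f' := hyf
    obtain ⟨b, t, rfl⟩ : ∃ b t, f' = b :: t := by
      cases f' with
      | nil =>
        simp only [List.mem_singleton] at hcx hcy
        exact absurd (hcx.trans hcy.symm) hxy
      | cons b t => exact ⟨b, t, rfl⟩
    have hab : a ≠ b := (List.isChain_cons_cons.mp hcf).1
    have hall' : ∀ z ∈ t, z = a ∨ z = b := by
      intro z hz
      rcases hall z (by simp [hz]) with h | h <;>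
      · rcases hall a (by simp) with ha | ha <;> rcases hall b (by simp) with hb | hb <;>
          simp_all
    rw [initPerm_two hab hall']
    exact List.isChain_cons_cons.mpr ⟨hab, List.isChain_cons_cons.mpr ⟨hab.symm, hcf⟩⟩
  · exact fun h => h.right_of_append
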